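/- Let ζ₁,...,ζ_{b₁} ∈ (ℝ>0)^d, let m_j ∈ (ℝ≥0)^d for j = 1,...,b₂, and let X', X ∈ (ℝ≥0)^{b₁×b₂} with X_{ij} ≤ X'_{ij} for all i,j. For each j with δ_j := ∑_i (X'_{ij} − X_{ij}) > 0 define the convex combination ζ̄_j = (∑_i (X'_{ij} − X_{ij})·ζ_i)/δ_j. Then ∏_{i=1}^{b₁} ∏_{k=1}^{d} ζ_i(k)^{∑_j m_j(k) X'_{ij}} ≤ (∏_{i,k} ζ_i(k)^{∑_j m_j(k) X_{ij}}) · ∏_{j: δ_j>0} ∏_{k=1}^{d} ζ̄_j(k)^{m_j(k)·δ_j}. -/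
import Mathlib

lemma aux_amgm {b₁ : ℕ} (w z : Fin b₁ → ℝ) (hw : ∀ i, 0 ≤ w i)
    (hw' : 0 < ∑ i, w i) (hz : ∀ i, 0 < z i) :
    (∏ i, z i ^ w i) ≤ ((∑ i, w i * z i) / (∑ i, w i)) ^ (∑ i, w i) := by
  have h := Real.geom_mean_le_arith_mean Finset.univ w z (fun i _ => hw i) hw'
    (fun i _ => (hz i).le)
  have hprod : 0 ≤ ∏ i, z i ^ w i :=
    Finset.prod_nonneg fun i _ => Real.rpow_nonneg (hz i).le _
  have h2 := Real.rpow_le_rpow (Real.rpow_nonneg hprod _) h hw'.le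
  rwa [← Real.rpow_mul hprod, inv_mul_cancel₀ hw'.ne', Real.rpow_one] at h2

/-- AM–GM rounding inequality: rounding `X'` down to `X` and redistributing the mass onto
the convex-combination level sets `ζ̄ⱼ` only increases the probability term. -/
theorem stmt_15 (b₁ b₂ d : ℕ) (ζ : Fin b₁ → Fin d → ℝ) (hζ : ∀ i k, 0 < ζ i k)
    (m : Fin b₂ → Fin d → ℝ) (hm : ∀ j k, 0 ≤ m j k)
    (X X' : Fin b₁ → Fin b₂ → ℝ) (hX : ∀ i j, 0 ≤ X i j) (hXX' : ∀ i j, X i j ≤ X' i j) :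
    (∏ i, ∏ k, ζ i k ^ (∑ j, m j k * X' i j)) ≤
      (∏ i, ∏ k, ζ i k ^ (∑ j, m j k * X i j)) *
        ∏ j ∈ Finset.univ.filter (fun j => 0 < ∑ i, (X' i j - X i j)), ∏ k,
          ((∑ i, (X' i j - X i j) * ζ i k) / (∑ i, (X' i j - X i j))) ^
            (m j k * ∑ i, (X' i j - X i j)) := by
  have hδ0 : ∀ i j, 0 ≤ X' i j - X i j := fun i j => sub_nonneg.2 (hXX' i j)
  -- split the exponent
  have split : ∀ i k, ζ i k ^ (∑ j, m j k * X' i j)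
      = ζ i k ^ (∑ j, m j k * X i j) * ζ i k ^ (∑ j, m j k * (X' i j - X i j)) := by
    intro i k
    rw [← Real.rpow_add (hζ i k), ← Finset.sum_add_distrib]
    exact congrArg _ (Finset.sum_congr rfl fun j _ => by ring)
  simp_rw [split, Finset.prod_mul_distrib]
  refine mul_le_mul_of_nonneg_left ?_
    (Finset.prod_nonneg fun i _ => Finset.prod_nonneg fun k _ =>
      Real.rpow_nonneg (hζ i k).le _)
  -- rewrite the remainder product as ∏ j ∏ k ∏ i
  have step1 : (∏ i, ∏ k, ζ i k ^ (∑ j, m j k * (X' i j - X i j)))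
      = ∏ j, ∏ k, ∏ i, ζ i k ^ (m j k * (X' i j - X i j)) := by
    calc (∏ i, ∏ k, ζ i k ^ (∑ j, m j k * (X' i j - X i j)))
        = ∏ i, ∏ k, ∏ j, ζ i k ^ (m j k * (X' i j - X i j)) :=
          Finset.prod_congr rfl fun i _ => Finset.prod_congr rfl fun k _ =>
            Real.rpow_sum_of_pos (hζ i k) _ _
      _ = ∏ k, ∏ i, ∏ j, ζ i k ^ (m j k * (X' i j - X i j)) := Finset.prod_comm
      _ = ∏ k, ∏ j, ∏ i, ζ i k ^ (m j k * (X' i j - X i j)) :=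
          Finset.prod_congr rfl fun k _ => Finset.prod_comm
      _ = ∏ j, ∏ k, ∏ i, ζ i k ^ (m j k * (X' i j - X i j)) := Finset.prod_comm
  rw [step1]
  -- drop the j's with zero total mass
  rw [← Finset.prod_filter_of_ne
    (p := fun j => 0 < ∑ i, (X' i j - X i j))
    (f := fun j => ∏ k, ∏ i, ζ i k ^ (m j k * (X' i j - X i j))) ?_]
  · refine Finset.prod_le_prod (fun j _ => Finset.prod_nonneg fun k _ =>
      Finset.prod_nonneg fun i _ => Real.rpow_nonneg (hζ i k).le _) ?_
    intro j hj
    rw [Finset.mem_filter] at hj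
    obtain ⟨-, hjpos⟩ := hj
    refine Finset.prod_le_prod (fun k _ => Finset.prod_nonneg fun i _ =>
      Real.rpow_nonneg (hζ i k).le _) ?_
    intro k _
    have hbar : 0 ≤ (∑ i, (X' i j - X i j) * ζ i k) / (∑ i, (X' i j - X i j)) :=
      div_nonneg (Finset.sum_nonneg fun i _ => mul_nonneg (hδ0 i j) (hζ i k).le) hjpos.le
    calc (∏ i, ζ i k ^ (m j k * (X' i j - X i j)))
        = (∏ i, ζ i k ^ (X' i j - X i j)) ^ (m j k) := by
          rw [← Real.finset_prod_rpow _ _ (fun i _ => Real.rpow_nonneg (hζ i k).le _)]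
          refine Finset.prod_congr rfl fun i _ => ?_
          rw [← Real.rpow_mul (hζ i k).le, mul_comm]
      _ ≤ (((∑ i, (X' i j - X i j) * ζ i k) / (∑ i, (X' i j - X i j))) ^
            (∑ i, (X' i j - X i j))) ^ (m j k) :=
          Real.rpow_le_rpow
            (Finset.prod_nonneg fun i _ => Real.rpow_nonneg (hζ i k).le _)
            (aux_amgm _ _ (fun i => hδ0 i j) hjpos (fun i => hζ i k)) (hm j k)
      _ = ((∑ i, (X' i j - X i j) * ζ i k) / (∑ i, (X' i j - X i j))) ^
            (m j k * ∑ i, (X' i j - X i j)) := by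
          rw [← Real.rpow_mul hbar, mul_comm]
  · intro j _ hfj
    by_contra hj
    have hsum : ∑ i, (X' i j - X i j) = 0 := le_antisymm (not_lt.1 hj)
      (Finset.sum_nonneg fun i _ => hδ0 i j)
    have hz : ∀ i, X' i j - X i j = 0 := fun i =>
      (Finset.sum_eq_zero_iff_of_nonneg (fun i _ => hδ0 i j)).1 hsum i (Finset.mem_univ i)
    exact hfj (by simp [hz])
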